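/- Let T be a real m×n matrix, M a real n×n matrix, and λ ≥ 0 a real number. Suppose that for every z ∈ ℝⁿ with T z ≤ 𝟏 one has T M z ≤ λ𝟏 (i.e. the set Λ = {z : T z ≤ 𝟏} is mapped by M into its λ-scaling). Then there exists a nonnegative real m×m matrix P such that P T = T M and P 𝟏 ≤ λ 𝟏. -/

import Mathlib

open Matrix Finset

/-- Farkas' lemma, algebraic form, by induction on the number of generators. -/
theorem farkas_cone {d : Type*} [Fintype d] :
    ∀ (k : ℕ) (v : Fin k → d → ℝ) (b : d → ℝ),
      (∀ z : d → ℝ, (∀ j, v j ⬝ᵥ z ≤ 0) → b ⬝ᵥ z ≤ 0) →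
      ∃ y : Fin k → ℝ, (∀ j, 0 ≤ y j) ∧ b = ∑ j, y j • v j := by
  intro k
  induction k with
  | zero =>
    intro v b h
    refine ⟨0, fun j => le_refl _, ?_⟩
    have hb : b ⬝ᵥ b ≤ 0 := h b (fun j => j.elim0)
    have hnn : 0 ≤ b ⬝ᵥ b := Finset.sum_nonneg fun i _ => mul_self_nonneg _
    have : b = 0 := dotProduct_self_eq_zero.mp (le_antisymm hb hnn)
    simp [this]
  | succ k ih =>
    intro v b h
    by_cases hc : ∀ z : d → ℝ, (∀ j : Fin k, v j.castSucc ⬝ᵥ z ≤ 0) → b ⬝ᵥ z ≤ 0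
    · obtain ⟨y, hy0, hyeq⟩ := ih (fun j => v j.castSucc) b hc
      refine ⟨Fin.snoc y 0, ?_, ?_⟩
      · intro j
        refine Fin.lastCases ?_ ?_ j <;> simp [hy0]
      · rw [Fin.sum_univ_castSucc]
        simp [hyeq]
    · push_neg at hc
      obtain ⟨z₀, hz₀, hbz₀⟩ := hc
      set a : d → ℝ := v (Fin.last k) with ha_def
      have hc0 : 0 < a ⬝ᵥ z₀ := by
        by_contra hle
        push_neg at hle
        have := h z₀ (fun j => Fin.lastCases hle hz₀ j)
        linarith
      set c : ℝ := a ⬝ᵥ z₀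
      set v' : Fin k → d → ℝ := fun j => v j.castSucc - ((v j.castSucc ⬝ᵥ z₀) / c) • a with hv'
      set b' : d → ℝ := b - ((b ⬝ᵥ z₀) / c) • a with hb'
      have key : ∀ z : d → ℝ, (∀ j, v' j ⬝ᵥ z ≤ 0) → b' ⬝ᵥ z ≤ 0 := by
        intro z hz
        set z' : d → ℝ := z - ((a ⬝ᵥ z) / c) • z₀ with hz'
        have haz' : a ⬝ᵥ z' = 0 := by
          simp only [hz', dotProduct_sub, dotProduct_smul, smul_eq_mul]
          field_simp
          simp [c]
        have hvz' : ∀ j : Fin k, v j.castSucc ⬝ᵥ z' = v' j ⬝ᵥ z := by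
          intro j
          simp only [hz', hv', dotProduct_sub, sub_dotProduct, dotProduct_smul,
            smul_dotProduct, smul_eq_mul]
          ring
        have hbz' : b ⬝ᵥ z' = b' ⬝ᵥ z := by
          simp only [hz', hb', dotProduct_sub, sub_dotProduct, dotProduct_smul,
            smul_dotProduct, smul_eq_mul]
          ring
        have := h z' (fun j => Fin.lastCases (le_of_eq haz') (fun j => (hvz' j) ▸ hz j) j)
        rw [hbz'] at this
        exact this
      obtain ⟨y, hy0, hyeq⟩ := ih v' b' key
      set μ : ℝ := (b ⬝ᵥ z₀) / c - ∑ j, y j * ((v j.castSucc ⬝ᵥ z₀) / c) with hμ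
      have hμ0 : 0 ≤ μ := by
        have h1 : 0 < (b ⬝ᵥ z₀) / c := div_pos hbz₀ hc0
        have h2 : ∀ j, y j * ((v j.castSucc ⬝ᵥ z₀) / c) ≤ 0 :=
          fun j => mul_nonpos_of_nonneg_of_nonpos (hy0 j)
            (div_nonpos_of_nonpos_of_nonneg (hz₀ j) hc0.le)
        have h3 : ∑ j, y j * ((v j.castSucc ⬝ᵥ z₀) / c) ≤ 0 :=
          Finset.sum_nonpos (fun j _ => h2 j)
        simp only [hμ]
        linarith
      refine ⟨Fin.snoc y μ, ?_, ?_⟩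
      · intro j
        refine Fin.lastCases ?_ ?_ j <;> simp [hμ0, hy0]
      · rw [Fin.sum_univ_castSucc]
        simp only [Fin.snoc_castSucc, Fin.snoc_last]
        have hb_eq : b = b' + ((b ⬝ᵥ z₀) / c) • a := by simp [hb']
        rw [hb_eq, hyeq]
        simp only [hv', smul_sub, smul_smul]
        rw [Finset.sum_sub_distrib]
        rw [← Finset.sum_smul]
        simp only [hμ, sub_smul]
        abel

private lemma snoc_dot {n : ℕ} (u : Fin n → ℝ) (r : ℝ) (z : Fin (n+1) → ℝ) :
    Fin.snoc u r ⬝ᵥ z = u ⬝ᵥ (fun l => z l.castSucc) + r * z (Fin.last n) := by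
  simp [dotProduct, Fin.sum_univ_castSucc]

/-- Existence of a Farkas certificate for λ-contractiveness: if the linear map `M`
maps the set `Λ = {z : T z ≤ 𝟏}` into its `λ`-scaling, i.e. `T z ≤ 𝟏 → T M z ≤ λ𝟏`,
then there is a nonnegative matrix `P` with `P T = T M` and `P 𝟏 ≤ λ 𝟏`. -/
theorem exists_farkas_certificate_of_contractive {n m : ℕ}
    (T : Matrix (Fin m) (Fin n) ℝ) (M : Matrix (Fin n) (Fin n) ℝ)
    (lam : ℝ) (hlam : 0 ≤ lam)
    (hcontr : ∀ z : Fin n → ℝ, T.mulVec z ≤ 1 → T.mulVec (M.mulVec z) ≤ lam • 1) :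
    ∃ P : Matrix (Fin m) (Fin m) ℝ,
      (∀ i j, 0 ≤ P i j) ∧ P * T = T * M ∧ P.mulVec 1 ≤ lam • 1 := by
  classical
  set v : Fin (m+1) → Fin (n+1) → ℝ :=
    Fin.snoc (fun j => Fin.snoc (T j) 1) (Fin.snoc 0 1) with hv
  have key : ∀ i : Fin m, ∃ y : Fin (m+1) → ℝ, (∀ j, 0 ≤ y j) ∧
      (Fin.snoc ((T * M) i) lam : Fin (n+1) → ℝ) = ∑ j, y j • v j := by
    intro i
    apply farkas_cone
    intro z hz
    set w : Fin n → ℝ := fun l => z l.castSucc with hw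
    set t : ℝ := z (Fin.last n) with ht
    have hjw : ∀ j : Fin m, T j ⬝ᵥ w + t ≤ 0 := by
      intro j
      have := hz j.castSucc
      rwa [hv, Fin.snoc_castSucc, snoc_dot, one_mul] at this
    have htle : t ≤ 0 := by
      have := hz (Fin.last m)
      rwa [hv, Fin.snoc_last, snoc_dot, zero_dotProduct, one_mul, zero_add] at this
    rw [snoc_dot]
    have hTM : (T * M) i ⬝ᵥ w = T.mulVec (M.mulVec w) i := by
      rw [Matrix.mulVec_mulVec]; rfl
    rw [hTM]
    set X : ℝ := T.mulVec (M.mulVec w) i with hX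
    rcases lt_or_eq_of_le htle with htlt | hteq
    · -- t < 0
      have hnt : 0 < -t := by linarith
      have hfeas : T.mulVec ((-t)⁻¹ • w) ≤ 1 := by
        intro j
        rw [Matrix.mulVec_smul]
        have : T.mulVec w j ≤ -t := by
          have := hjw j; simp only [Matrix.mulVec]; linarith
        calc ((-t)⁻¹ • T.mulVec w) j = (-t)⁻¹ * T.mulVec w j := rfl
          _ ≤ (-t)⁻¹ * (-t) := by
              exact mul_le_mul_of_nonneg_left this (inv_nonneg.mpr hnt.le)
          _ = 1 := inv_mul_cancel₀ hnt.ne'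
      have := hcontr _ hfeas i
      rw [Matrix.mulVec_smul, Matrix.mulVec_smul] at this
      have h1 : (-t)⁻¹ * X ≤ lam := by
        simpa [hX, Pi.smul_apply, smul_eq_mul] using this
      have h2 : X ≤ lam * (-t) := by
        have := mul_le_mul_of_nonneg_left h1 hnt.le
        rw [← mul_assoc, mul_inv_cancel₀ hnt.ne', one_mul] at this
        linarith
      linarith
    · -- t = 0
      have hw0 : ∀ j, T.mulVec w j ≤ 0 := by
        intro j; have := hjw j; simp only [Matrix.mulVec]; linarith [hteq.symm ▸ this]
      have hs : ∀ s : ℝ, 0 < s → s * X ≤ lam := by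
        intro s hs
        have hfeas : T.mulVec (s • w) ≤ 1 := by
          intro j
          rw [Matrix.mulVec_smul]
          have : s * T.mulVec w j ≤ 0 :=
            mul_nonpos_of_nonneg_of_nonpos hs.le (hw0 j)
          calc (s • T.mulVec w) j = s * T.mulVec w j := rfl
            _ ≤ 0 := this
            _ ≤ 1 := zero_le_one
        have := hcontr _ hfeas i
        rw [Matrix.mulVec_smul, Matrix.mulVec_smul] at this
        simpa [hX, Pi.smul_apply, smul_eq_mul] using this
      have hX0 : X ≤ 0 := by
        by_contra hXpos
        push_neg at hXpos
        have := hs ((lam + 1) / X) (div_pos (by linarith) hXpos)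
        rw [div_mul_cancel₀ _ hXpos.ne'] at this
        linarith
      rw [← ht, hteq]
      linarith
  choose y hy0 hyeq using key
  refine ⟨fun i j => y i j.castSucc, fun i j => hy0 i j.castSucc, ?_, ?_⟩
  · ext i l
    have := congrFun (hyeq i) l.castSucc
    rw [Fin.snoc_castSucc] at this
    simp only [Finset.sum_apply, Pi.smul_apply, smul_eq_mul] at this
    rw [Fin.sum_univ_castSucc] at this
    simp only [hv, Fin.snoc_castSucc, Fin.snoc_last, Pi.zero_apply, mul_zero,
      add_zero] at this
    rw [Matrix.mul_apply]
    rw [Matrix.mul_apply] at this; rw [this]; rfl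
  · intro i
    have := congrFun (hyeq i) (Fin.last n)
    rw [Fin.snoc_last] at this
    simp only [Finset.sum_apply, Pi.smul_apply, smul_eq_mul] at this
    rw [Fin.sum_univ_castSucc] at this
    simp only [hv, Fin.snoc_castSucc, Fin.snoc_last, mul_one] at this
    have hsum : ∑ j : Fin m, y i j.castSucc ≤ lam := by
      have := hy0 i (Fin.last m); linarith [this]
    simp only [Matrix.mulVec, dotProduct, Pi.one_apply, mul_one, Pi.smul_apply,
      smul_eq_mul]
    exact hsum
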